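/- arXiv:2006.03551 — 2 statements merged into one kernel-verified Lean document; each statement's English description precedes it below -/
import Mathlib

section
/- Let P be a Poisson algebra over a field 𝔽 of positive characteristic p > 0. If P is Lie nilpotent, then the Poisson ideal {P,P}·P is nil of bounded index: there exists a positive integer r such that x^r = 0 for every x ∈ {P,P}·P. -/
/-- A Poisson bracket on a commutative associative unital `F`-algebra `P`:
an `F`-bilinear, alternating bracket satisfying the Jacobi identity and the
Leibniz rule `{a·b, c} = a·{b,c} + b·{a,c}`. -/
structure PoissonBracket (F P : Type*) [Field F] [CommRing P] [Algebra F P] where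
  bracket : P → P → P
  add_left : ∀ a b c : P, bracket (a + b) c = bracket a c + bracket b c
  smul_left : ∀ (r : F) (a b : P), bracket (r • a) b = r • bracket a b
  add_right : ∀ a b c : P, bracket a (b + c) = bracket a b + bracket a c
  smul_right : ∀ (r : F) (a b : P), bracket a (r • b) = r • bracket a b
  alt : ∀ a : P, bracket a a = 0
  jacobi : ∀ a b c : P,
    bracket (bracket a b) c + bracket (bracket b c) a + bracket (bracket c a) b = 0
  leibniz : ∀ a b c : P, bracket (a * b) c = a * bracket b c + b * bracket a c

namespace PoissonBracket

variable {F P : Type*} [Field F] [CommRing P] [Algebra F P]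

/-- `{A, B}`: the `F`-span of all brackets of elements of `A` with elements of `B`. -/
def lieSpan (pb : PoissonBracket F P) (A B : Submodule F P) : Submodule F P :=
  Submodule.span F {z : P | ∃ a ∈ A, ∃ b ∈ B, z = pb.bracket a b}

/-- Upper derived series: `δ̃₀(P) = P`, `δ̃ₙ₊₁(P) = {δ̃ₙ(P), δ̃ₙ(P)}·P`. -/
def udelta (pb : PoissonBracket F P) : ℕ → Submodule F P
  | 0 => ⊤
  | n + 1 => pb.lieSpan (pb.udelta n) (pb.udelta n) * ⊤

/-- Derived series of a Lie ideal `I`: `δ₀(I) = I`, `δₙ₊₁(I) = {δₙ(I), δₙ(I)}`. -/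
def dseries (pb : PoissonBracket F P) (I : Submodule F P) : ℕ → Submodule F P
  | 0 => I
  | n + 1 => pb.lieSpan (pb.dseries I n) (pb.dseries I n)

/-- Lower central series of a Lie ideal `I`, indexed so that `lcs I 1 = γ₁(I) = I`
and `lcs I (n+1) = γₙ₊₁(I) = {γₙ(I), I}` for `n ≥ 1` (index `0` is a dummy equal to `I`). -/
def lcs (pb : PoissonBracket F P) (I : Submodule F P) : ℕ → Submodule F P
  | 0 => I
  | 1 => I
  | n + 2 => pb.lieSpan (pb.lcs I (n + 1)) I

/-- Upper Lie power series: `P⁽¹⁾ = P`, `P⁽ⁿ⁾ = {P⁽ⁿ⁻¹⁾, P}·P` for `n > 1`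
(index `0` is a dummy equal to `P`). -/
def ulps (pb : PoissonBracket F P) : ℕ → Submodule F P
  | 0 => ⊤
  | 1 => ⊤
  | n + 2 => pb.lieSpan (pb.ulps (n + 1)) ⊤ * ⊤

/-- A Poisson ideal: an ideal for the associative product which is also a Lie ideal. -/
def IsPoissonIdeal (pb : PoissonBracket F P) (I : Submodule F P) : Prop :=
  (∀ x ∈ I, ∀ p : P, p * x ∈ I) ∧ (∀ x ∈ I, ∀ p : P, pb.bracket x p ∈ I)

/-- The Poisson ideal generated by a set `S`: the smallest Poisson ideal containing `S`. -/
def poissonSpan (pb : PoissonBracket F P) (S : Set P) : Submodule F P :=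
  sInf {I : Submodule F P | pb.IsPoissonIdeal I ∧ S ⊆ I}

end PoissonBracket

open PoissonBracket

namespace PoissonBracket

variable {F P : Type*} [Field F] [CommRing P] [Algebra F P] (pb : PoissonBracket F P)

lemma bracket_antisymm' (a b : P) : pb.bracket a b = - pb.bracket b a := by
  have h := pb.alt (a + b)
  rw [pb.add_left, pb.add_right, pb.add_right, pb.alt, pb.alt] at h
  linear_combination h

lemma bracket_mul_right' (a b c : P) :
    pb.bracket a (b * c) = b * pb.bracket a c + c * pb.bracket a b := by
  rw [pb.bracket_antisymm' a (b * c), pb.leibniz, pb.bracket_antisymm' c a,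
    pb.bracket_antisymm' b a]
  ring

/-- Key identity: `{g,b}² = {{g, b·g}, b} − g·{{g,b}, b}` (pure Leibniz). -/
lemma sq_bracket' (g b : P) :
    pb.bracket g b ^ 2 =
      pb.bracket (pb.bracket g (b * g)) b - g * pb.bracket (pb.bracket g b) b := by
  have h1 : pb.bracket g (b * g) = g * pb.bracket g b := by
    rw [pb.bracket_mul_right', pb.alt]; ring
  rw [h1, pb.leibniz]; ring

lemma mem_lieSpan_of' {A B : Submodule F P} {a b : P} (ha : a ∈ A) (hb : b ∈ B) :
    pb.bracket a b ∈ pb.lieSpan A B :=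
  Submodule.subset_span ⟨a, ha, b, hb, rfl⟩

lemma mul_top_mul_top'' {F P : Type*} [Field F] [CommRing P] [Algebra F P] (M : Submodule F P) : M * ⊤ * ⊤ = M * (⊤ : Submodule F P) := by
  rw [mul_assoc]
  congr 1
  refine le_antisymm (Submodule.mul_le.2 fun _ _ _ _ => Submodule.mem_top) ?_
  intro x _
  simpa using Submodule.mul_mem_mul (Submodule.mem_top (x := x)) (Submodule.mem_top (x := (1:P)))

lemma mul_mem_ideal'' {F P : Type*} [Field F] [CommRing P] [Algebra F P] {M : Submodule F P} {y : P} (hy : y ∈ M * ⊤) (z : P) :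
    y * z ∈ M * (⊤ : Submodule F P) := by
  rw [← mul_top_mul_top'' M]
  exact Submodule.mul_mem_mul hy Submodule.mem_top

lemma sq_mem' (m : ℕ) {g b : P} (hg : g ∈ pb.lcs ⊤ (m + 1)) :
    pb.bracket g b ^ 2 ∈ pb.lcs ⊤ (m + 3) * (⊤ : Submodule F P) := by
  rw [pb.sq_bracket']
  have h1 : pb.bracket g (b * g) ∈ pb.lcs ⊤ (m + 2) :=
    pb.mem_lieSpan_of' hg Submodule.mem_top
  have h2 : pb.bracket (pb.bracket g (b * g)) b ∈ pb.lcs ⊤ (m + 3) :=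
    pb.mem_lieSpan_of' h1 Submodule.mem_top
  have h3 : pb.bracket (pb.bracket g b) b ∈ pb.lcs ⊤ (m + 3) :=
    pb.mem_lieSpan_of' (pb.mem_lieSpan_of' hg Submodule.mem_top) Submodule.mem_top
  refine Submodule.sub_mem _ ?_ ?_
  · simpa using Submodule.mul_mem_mul h2 (Submodule.mem_top (x := (1:P)))
  · rw [mul_comm g _]
    exact Submodule.mul_mem_mul h3 Submodule.mem_top

lemma pow_p_mem' (p : ℕ) [Fact p.Prime] [CharP P p] (m : ℕ) {x : P}
    (hx : x ∈ pb.lcs ⊤ (m + 2) * (⊤ : Submodule F P)) :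
    x ^ p ∈ pb.lcs ⊤ (m + 3) * (⊤ : Submodule F P) := by
  have hp2 : 2 ≤ p := (Fact.out : p.Prime).two_le
  refine Submodule.mul_induction_on hx ?_ ?_
  · intro a ha t _
    have hap : a ^ p ∈ pb.lcs ⊤ (m + 3) * (⊤ : Submodule F P) := by
      have ha' : a ∈ Submodule.span F
          {z : P | ∃ g ∈ pb.lcs ⊤ (m + 1), ∃ b ∈ (⊤ : Submodule F P), z = pb.bracket g b} := ha
      clear ha
      induction ha' using Submodule.span_induction with
      | mem z hz =>
        obtain ⟨g, hg, b, -, rfl⟩ := hz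
        have : pb.bracket g b ^ p = pb.bracket g b ^ 2 * pb.bracket g b ^ (p - 2) := by
          rw [← pow_add]
          congr 1
          omega
        rw [this]
        exact mul_mem_ideal'' (pb.sq_mem' m hg) _
      | zero =>
        rw [zero_pow (by omega)]
        exact Submodule.zero_mem _
      | add y z hy hz ihy ihz =>
        rw [add_pow_char]
        exact Submodule.add_mem _ ihy ihz
      | smul c y hy ihy =>
        rw [smul_pow]
        exact Submodule.smul_mem _ _ ihy
    rw [mul_pow]
    exact mul_mem_ideal'' hap _
  · intro y z hy hz
    rw [add_pow_char]
    exact Submodule.add_mem _ hy hz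

end PoissonBracket

/-- Over a field of positive characteristic `p > 0`, if `P` is Lie nilpotent then
the Poisson ideal `{P,P}·P` is nil of bounded index. -/
theorem lieNilpotent_lieSpan_mul_top_isNil_boundedIndex
    {F P : Type*} [Field F] [CommRing P] [Algebra F P]
    (p : ℕ) [CharP F p] (hp : 0 < p)
    (pb : PoissonBracket F P)
    (hnilp : ∃ c : ℕ, pb.lcs ⊤ c = ⊥) :
    ∃ r : ℕ, 0 < r ∧ ∀ x ∈ pb.lieSpan ⊤ ⊤ * (⊤ : Submodule F P), x ^ r = 0 := by
    obtain ⟨c, hc⟩ := hnilp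
    match c, hc with
    | 0, hc =>
      refine ⟨1, one_pos, fun x _ => ?_⟩
      have hx0 : x ∈ (⊥ : Submodule F P) := by
        have h : (⊤ : Submodule F P) = ⊥ := hc
        exact h ▸ Submodule.mem_top
      simpa using (Submodule.mem_bot F).1 hx0
    | 1, hc =>
      refine ⟨1, one_pos, fun x _ => ?_⟩
      have hx0 : x ∈ (⊥ : Submodule F P) := by
        have h : (⊤ : Submodule F P) = ⊥ := hc
        exact h ▸ Submodule.mem_top
      simpa using (Submodule.mem_bot F).1 hx0
    | (m + 2), hc =>
      refine ⟨p ^ m, pow_pos hp m, fun x hx => ?_⟩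
      rcases subsingleton_or_nontrivial P with hP | hP
      · exact Subsingleton.elim _ _
      · have hprime : p.Prime :=
          (CharP.char_is_prime_or_zero F p).resolve_right (by omega)
        haveI : Fact p.Prime := ⟨hprime⟩
        haveI : CharP P p := charP_of_injective_ringHom (algebraMap F P).injective p
        have hx2 : x ∈ pb.lcs ⊤ 2 * (⊤ : Submodule F P) := hx
        have main : ∀ j : ℕ, x ^ p ^ j ∈ pb.lcs ⊤ (j + 2) * (⊤ : Submodule F P) := by
          intro j
          induction j with
          | zero => simpa using hx2
          | succ j ih =>
            rw [pow_succ, pow_mul]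
            exact pb.pow_p_mem' p j ih
        have hm := main m
        rw [hc, Submodule.bot_mul] at hm
        exact (Submodule.mem_bot F).1 hm
end

section
/- Let P be a Poisson algebra over a field 𝔽 and let I be a Lie ideal of P. Then γ₃(I)·γ₄(I) ⊆ δ₂(I)·P. -/
open PoissonBracket

namespace PoissonBracket

variable {F P : Type*} [Field F] [CommRing P] [Algebra F P]

/-! ### Basic bracket lemmas -/

lemma zero_left (pb : PoissonBracket F P) (x : P) : pb.bracket 0 x = 0 := by
  have h := pb.add_left 0 0 x
  rw [add_zero] at h
  linear_combination -h

lemma zero_right (pb : PoissonBracket F P) (x : P) : pb.bracket x 0 = 0 := by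
  have h := pb.add_right x 0 0
  rw [add_zero] at h
  linear_combination -h

lemma antisym (pb : PoissonBracket F P) (x y : P) :
    pb.bracket x y = -pb.bracket y x := by
  have h := pb.alt (x + y)
  rw [pb.add_left, pb.add_right, pb.add_right, pb.alt, pb.alt] at h
  linear_combination h

lemma neg_left (pb : PoissonBracket F P) (x y : P) :
    pb.bracket (-x) y = -pb.bracket x y := by
  have h := pb.add_left x (-x) y
  rw [add_neg_cancel, pb.zero_left] at h
  linear_combination -h

lemma neg_right (pb : PoissonBracket F P) (x y : P) :
    pb.bracket x (-y) = -pb.bracket x y := by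
  have h := pb.add_right x y (-y)
  rw [add_neg_cancel, pb.zero_right] at h
  linear_combination -h

/-- Right Leibniz rule. -/
lemma rleibniz (pb : PoissonBracket F P) (a b c : P) :
    pb.bracket a (b * c) = b * pb.bracket a c + c * pb.bracket a b := by
  have h := pb.leibniz b c a
  have h1 := pb.antisym a (b * c)
  have h2 := pb.antisym c a
  have h3 := pb.antisym b a
  linear_combination h1 - h - b * h2 - c * h3

/-- Jacobi identity in Leibniz form. -/
lemma jacobi' (pb : PoissonBracket F P) (p q r : P) :
    pb.bracket p (pb.bracket q r)
      = pb.bracket (pb.bracket p q) r - pb.bracket (pb.bracket p r) q := by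
  have hj := pb.jacobi p q r
  have h1 := pb.antisym p (pb.bracket q r)
  have h2 : pb.bracket (pb.bracket r p) q = -pb.bracket (pb.bracket p r) q := by
    rw [pb.antisym r p, pb.neg_left]
  linear_combination h1 - hj + h2

lemma br_swap (pb : PoissonBracket F P) (p q r : P) :
    pb.bracket (pb.bracket p q) r = -pb.bracket (pb.bracket q p) r := by
  rw [pb.antisym p q, pb.neg_left]

lemma br_third (pb : PoissonBracket F P) (m u v : P) :
    pb.bracket (pb.bracket u v) m
      = pb.bracket (pb.bracket m v) u - pb.bracket (pb.bracket m u) v := by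
  have h1 := pb.antisym (pb.bracket u v) m
  have h2 := pb.jacobi' m u v
  linear_combination h1 - h2

/-! ### Membership helpers -/

lemma mem_d1 (pb : PoissonBracket F P) (I : Submodule F P) {u v : P}
    (hu : u ∈ I) (hv : v ∈ I) : pb.bracket u v ∈ pb.dseries I 1 :=
  Submodule.subset_span ⟨u, hu, v, hv, rfl⟩

lemma mem_d2 (pb : PoissonBracket F P) (I : Submodule F P) {u v : P}
    (hu : u ∈ pb.dseries I 1) (hv : v ∈ pb.dseries I 1) :
    pb.bracket u v ∈ pb.dseries I 2 :=
  Submodule.subset_span ⟨u, hu, v, hv, rfl⟩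

lemma mem_M_self (pb : PoissonBracket F P) (I : Submodule F P) {w : P}
    (hw : w ∈ pb.dseries I 2) : w ∈ pb.dseries I 2 * (⊤ : Submodule F P) := by
  have h := Submodule.mul_mem_mul hw (Submodule.mem_top (R := F) (x := (1 : P)))
  simpa using h

lemma mem_M_mul (pb : PoissonBracket F P) (I : Submodule F P) (p : P) {w : P}
    (hw : w ∈ pb.dseries I 2) : p * w ∈ pb.dseries I 2 * (⊤ : Submodule F P) := by
  rw [mul_comm p w]
  exact Submodule.mul_mem_mul hw Submodule.mem_top

/-! ### The rotation lemma -/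

/-- Key lemma: for `a,b,c,y ∈ I` and `t ∈ δ₁(I)`,
`{y,{a,b}}·{c,t} ≡ {y,{c,a}}·{b,t}` modulo `δ₂(I)·P`. -/
lemma rot_mem (pb : PoissonBracket F P) (I : Submodule F P)
    (hI : ∀ x ∈ I, ∀ p : P, pb.bracket x p ∈ I)
    (a b c y t : P) (ha : a ∈ I) (hb : b ∈ I) (hc : c ∈ I) (hy : y ∈ I)
    (ht : t ∈ pb.dseries I 1) :
    pb.bracket y (pb.bracket a b) * pb.bracket c t
      - pb.bracket y (pb.bracket c a) * pb.bracket b t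
      ∈ pb.dseries I 2 * (⊤ : Submodule F P) := by
  have e2 : pb.bracket y (pb.bracket a (b * c))
      = pb.bracket a c * pb.bracket y b + b * pb.bracket y (pb.bracket a c)
        + (c * pb.bracket y (pb.bracket a b) + pb.bracket a b * pb.bracket y c) := by
    rw [pb.rleibniz a b c, pb.add_right, pb.rleibniz y b (pb.bracket a c),
      pb.rleibniz y c (pb.bracket a b)]
    ring
  have e4 : pb.bracket y (pb.bracket c a) = -pb.bracket y (pb.bracket a c) := by
    rw [pb.antisym c a, pb.neg_right]
  have hE : pb.bracket y (pb.bracket a b) * pb.bracket c t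
      - pb.bracket y (pb.bracket c a) * pb.bracket b t
      = pb.bracket (pb.bracket y (pb.bracket a (b * c))) t
        - c * pb.bracket (pb.bracket y (pb.bracket a b)) t
        - pb.bracket a b * pb.bracket (pb.bracket y c) t
        - pb.bracket y c * pb.bracket (pb.bracket a b) t
        - b * pb.bracket (pb.bracket y (pb.bracket a c)) t
        - pb.bracket a c * pb.bracket (pb.bracket y b) t
        - pb.bracket y b * pb.bracket (pb.bracket a c) t := by
    rw [e2, pb.add_left, pb.add_left, pb.add_left, pb.leibniz, pb.leibniz, pb.leibniz, pb.leibniz, e4]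
    ring
  rw [hE]
  have hab : pb.bracket a b ∈ I := hI a ha b
  have hac : pb.bracket a c ∈ I := hI a ha c
  have habc : pb.bracket a (b * c) ∈ I := hI a ha (b * c)
  have m1 : pb.bracket (pb.bracket y (pb.bracket a (b * c))) t
      ∈ pb.dseries I 2 * (⊤ : Submodule F P) :=
    pb.mem_M_self I (pb.mem_d2 I (pb.mem_d1 I hy habc) ht)
  have m2 := pb.mem_M_mul I c (pb.mem_d2 I (pb.mem_d1 I hy hab) ht)
  have m3 := pb.mem_M_mul I (pb.bracket a b) (pb.mem_d2 I (pb.mem_d1 I hy hc) ht)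
  have m4 := pb.mem_M_mul I (pb.bracket y c) (pb.mem_d2 I (pb.mem_d1 I ha hb) ht)
  have m5 := pb.mem_M_mul I b (pb.mem_d2 I (pb.mem_d1 I hy hac) ht)
  have m6 := pb.mem_M_mul I (pb.bracket a c) (pb.mem_d2 I (pb.mem_d1 I hy hb) ht)
  have m7 := pb.mem_M_mul I (pb.bracket y b) (pb.mem_d2 I (pb.mem_d1 I ha hc) ht)
  exact sub_mem (sub_mem (sub_mem (sub_mem (sub_mem (sub_mem m1 m2) m3) m4) m5) m6) m7

/-! ### The core product lemma -/

/-- For `a,b,c,d,x,y ∈ I`, `{{a,b},c}·{{d,x},y} ∈ δ₂(I)·P`. -/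
lemma core6 (pb : PoissonBracket F P) (I : Submodule F P)
    (hI : ∀ x ∈ I, ∀ p : P, pb.bracket x p ∈ I)
    (a b c d x y : P) (ha : a ∈ I) (hb : b ∈ I) (hc : c ∈ I) (hd : d ∈ I)
    (hx : x ∈ I) (hy : y ∈ I) :
    pb.bracket (pb.bracket a b) c * pb.bracket (pb.bracket d x) y
      ∈ pb.dseries I 2 * (⊤ : Submodule F P) := by
  have h1 := pb.rot_mem I hI b c d a (pb.bracket x y) hb hc hd ha (pb.mem_d1 I hx hy)
  have h2 := pb.rot_mem I hI b c x a (pb.bracket d y) hb hc hx ha (pb.mem_d1 I hd hy)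
  have h3 := pb.rot_mem I hI b d x a (pb.bracket c y) hb hd hx ha (pb.mem_d1 I hc hy)
  have h4 := pb.rot_mem I hI d b x a (pb.bracket c y) hd hb hx ha (pb.mem_d1 I hc hy)
  have h5 := pb.rot_mem I hI d b y a (pb.bracket c x) hd hb hy ha (pb.mem_d1 I hc hx)
  have h6 := pb.rot_mem I hI x b y a (pb.bracket c d) hx hb hy ha (pb.mem_d1 I hc hd)
  have h7 := pb.rot_mem I hI c a d b (pb.bracket x y) hc ha hd hb (pb.mem_d1 I hx hy)
  have h8 := pb.rot_mem I hI c a x b (pb.bracket d y) hc ha hx hb (pb.mem_d1 I hd hy)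
  have h9 := pb.rot_mem I hI c a y b (pb.bracket d x) hc ha hy hb (pb.mem_d1 I hd hx)
  have hT : pb.bracket (pb.bracket a b) c * pb.bracket (pb.bracket d x) y
      = (pb.bracket a (pb.bracket b c) * pb.bracket d (pb.bracket x y) - pb.bracket a (pb.bracket d b) * pb.bracket c (pb.bracket x y))
        - (pb.bracket a (pb.bracket b c) * pb.bracket x (pb.bracket d y) - pb.bracket a (pb.bracket x b) * pb.bracket c (pb.bracket d y))
        + (pb.bracket a (pb.bracket b d) * pb.bracket x (pb.bracket c y) - pb.bracket a (pb.bracket x b) * pb.bracket d (pb.bracket c y))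
        + (pb.bracket a (pb.bracket d b) * pb.bracket x (pb.bracket c y) - pb.bracket a (pb.bracket x d) * pb.bracket b (pb.bracket c y))
        + (pb.bracket a (pb.bracket d b) * pb.bracket x (pb.bracket c y) - pb.bracket a (pb.bracket x d) * pb.bracket b (pb.bracket c y))
        - (pb.bracket a (pb.bracket d b) * pb.bracket y (pb.bracket c x) - pb.bracket a (pb.bracket y d) * pb.bracket b (pb.bracket c x))
        + (pb.bracket a (pb.bracket x b) * pb.bracket y (pb.bracket c d) - pb.bracket a (pb.bracket y x) * pb.bracket b (pb.bracket c d))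
        - (pb.bracket b (pb.bracket c a) * pb.bracket d (pb.bracket x y) - pb.bracket b (pb.bracket d c) * pb.bracket a (pb.bracket x y))
        + (pb.bracket b (pb.bracket c a) * pb.bracket x (pb.bracket d y) - pb.bracket b (pb.bracket x c) * pb.bracket a (pb.bracket d y))
        - (pb.bracket b (pb.bracket c a) * pb.bracket y (pb.bracket d x) - pb.bracket b (pb.bracket y c) * pb.bracket a (pb.bracket d x))
        - (pb.bracket b (pb.bracket c a) * pb.bracket y (pb.bracket d x) - pb.bracket b (pb.bracket y c) * pb.bracket a (pb.bracket d x)) := by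
    simp only [pb.jacobi']
    rw [pb.br_swap b a c, pb.br_swap d c y, pb.br_swap x c y, pb.br_swap x d y,
      pb.br_swap y c d, pb.br_swap y c x, pb.br_swap y d c, pb.br_swap y d x,
      pb.br_swap y x c, pb.br_swap y x d]
    rw [pb.br_third a b c, pb.br_third c d y, pb.br_third c x y, pb.br_third d x y]
    ring
  rw [hT]
  exact sub_mem (sub_mem (add_mem (sub_mem (add_mem (sub_mem (add_mem (add_mem (add_mem
    (sub_mem h1 h2) h3) h4) h4) h5) h6) h7) h8) h9) h9

end PoissonBracket

/-- For a Lie ideal `I` of a Poisson algebra `P`, `γ₃(I)·γ₄(I) ⊆ δ₂(I)·P`. -/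
theorem lcs_three_mul_lcs_four_le
    {F P : Type*} [Field F] [CommRing P] [Algebra F P]
    (pb : PoissonBracket F P) (I : Submodule F P)
    (hI : ∀ x ∈ I, ∀ p : P, pb.bracket x p ∈ I) :
    pb.lcs I 3 * pb.lcs I 4 ≤ pb.dseries I 2 * ⊤ := by
  -- products of two γ₃-type generators lie in δ₂·P
  have prodMem : ∀ u ∈ pb.lcs I 2, ∀ v ∈ I, ∀ w ∈ pb.lcs I 2, ∀ y ∈ I,
      pb.bracket u v * pb.bracket w y ∈ pb.dseries I 2 * (⊤ : Submodule F P) := by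
    intro u hu
    have hu' : u ∈ Submodule.span F {z : P | ∃ a ∈ I, ∃ b ∈ I, z = pb.bracket a b} := hu
    clear hu
    induction hu' using Submodule.span_induction with
    | mem z hz =>
      obtain ⟨a, ha, b, hb, rfl⟩ := hz
      intro v hv w hw y hy
      have hw' : w ∈ Submodule.span F {z : P | ∃ a ∈ I, ∃ b ∈ I, z = pb.bracket a b} := hw
      clear hw
      induction hw' using Submodule.span_induction with
      | mem z2 hz2 =>
        obtain ⟨d, hd, x, hx, rfl⟩ := hz2
        exact pb.core6 I hI a b v d x y ha hb hv hd hx hy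
      | zero => rw [pb.zero_left, mul_zero]; exact zero_mem _
      | add p q hp hq ihp ihq => rw [pb.add_left, mul_add]; exact add_mem ihp ihq
      | smul r p hp ih =>
        rw [pb.smul_left, mul_smul_comm]; exact Submodule.smul_mem _ _ ih
    | zero => intro v hv w hw y hy; rw [pb.zero_left, zero_mul]; exact zero_mem _
    | add p q hp hq ihp ihq =>
      intro v hv w hw y hy
      rw [pb.add_left, add_mul]
      exact add_mem (ihp v hv w hw y hy) (ihq v hv w hw y hy)
    | smul r p hp ih =>
      intro v hv w hw y hy
      rw [pb.smul_left, smul_mul_assoc]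
      exact Submodule.smul_mem _ _ (ih v hv w hw y hy)
  have h2I : pb.lcs I 2 ≤ I := by
    refine Submodule.span_le.mpr ?_
    rintro z ⟨a, ha, b, hb, rfl⟩
    exact hI a ha b
  have h32 : pb.lcs I 3 ≤ pb.lcs I 2 := by
    refine Submodule.span_le.mpr ?_
    rintro z ⟨u, hu, v, hv, rfl⟩
    exact Submodule.subset_span ⟨u, h2I hu, v, hv, rfl⟩
  have h43 : pb.lcs I 4 ≤ pb.lcs I 3 := by
    refine Submodule.span_le.mpr ?_
    rintro z ⟨u, hu, v, hv, rfl⟩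
    exact Submodule.subset_span ⟨u, h32 hu, v, hv, rfl⟩
  refine Submodule.mul_le.mpr ?_
  intro m hm n hn
  have hn3 : n ∈ pb.lcs I 3 := h43 hn
  clear hn
  have hm' : m ∈ Submodule.span F
      {z : P | ∃ u ∈ pb.lcs I 2, ∃ v ∈ I, z = pb.bracket u v} := hm
  clear hm
  induction hm' using Submodule.span_induction with
  | mem z hz =>
    obtain ⟨u, hu, v, hv, rfl⟩ := hz
    have hn' : n ∈ Submodule.span F
        {z : P | ∃ u ∈ pb.lcs I 2, ∃ v ∈ I, z = pb.bracket u v} := hn3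
    clear hn3
    induction hn' using Submodule.span_induction with
    | mem z2 hz2 =>
      obtain ⟨w, hw, y, hy, rfl⟩ := hz2
      exact prodMem u hu v hv w hw y hy
    | zero => rw [mul_zero]; exact zero_mem _
    | add p q hp hq ihp ihq => rw [mul_add]; exact add_mem ihp ihq
    | smul r p hp ih => rw [mul_smul_comm]; exact Submodule.smul_mem _ _ ih
  | zero => rw [zero_mul]; exact zero_mem _
  | add p q hp hq ihp ihq => rw [add_mul]; exact add_mem ihp ihq
  | smul r p hp ih => rw [smul_mul_assoc]; exact Submodule.smul_mem _ _ ih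
end
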